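/- arXiv:2407.03375 — 4 statements merged into one kernel-verified Lean document; each statement's English description precedes it below -/
import Mathlib

section
/- For a factorized interaction kernel ω(c,c₁,c₂) = ω₁(c)ω₂(c₁)ω₃(c₂), the eigenvalue problem of the linearization at p ≡ 1/2 has no negative eigenvalue with a positive eigenfunction. Precisely: suppose ω₁, ω₂, ω₃ : (0,∞) → ℝ are measurable and strictly positive μ-a.e., ω₂ and ω₃ are μ-integrable, k ∈ L¹(μ) with k > 0 μ-a.e. and ω₂·k ∈ L¹(μ), λ < 0, and with Γ(c) := ω₁(c)·(∫₀^∞ ω₂ dμ)·(∫₀^∞ ω₃ dμ) one has λ + Γ(c)/2 > 0 for μ-a.e. c and k(c)·(λ + Γ(c)/2) = ω₁(c)·(∫₀^∞ ω₂(c₁)k(c₁) dμ(c₁))·(∫₀^∞ ω₃(c₂) dμ(c₂)) for μ-a.e. c. Then a contradiction follows (no such λ and k can exist). -/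
open MeasureTheory Set

lemma integral_pos_of_ae_pos {μ : Measure ℝ} (hμ : μ ≠ 0) (f : ℝ → ℝ)
    (hf : Integrable f μ) (hfp : ∀ᵐ x ∂μ, 0 < f x) : 0 < ∫ x, f x ∂μ := by
  rw [integral_pos_iff_support_of_nonneg_ae (hfp.mono fun x h => h.le) hf]
  by_contra h
  push_neg at h
  have h0 : μ (Function.support f) = 0 := le_antisymm h bot_le
  have hz : ∀ᵐ x ∂μ, f x = 0 := by
    rw [ae_iff]
    convert h0 using 2
    rfl
  haveI : (ae μ).NeBot := ae_neBot.2 hμ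
  obtain ⟨x, hx1, hx2⟩ := (hfp.and hz).exists
  exact hx1.ne' hx2

/-- The finite measure on `(0,∞)` with density `g` with respect to Lebesgue measure. -/
noncomputable def netMeasure (g : ℝ → ℝ) : Measure ℝ :=
  (volume.restrict (Ioi (0:ℝ))).withDensity (fun c => ENNReal.ofReal (g c))

/-- For a factorized kernel `ω(c,c₁,c₂) = ω₁(c)ω₂(c₁)ω₃(c₂)`, the eigenvalue problem of the
linearization at `p ≡ 1/2` has no negative eigenvalue `λ` with a positive eigenfunction `k`. -/
theorem factorized_kernel_no_negative_eigenvalue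
    (g : ℝ → ℝ) (hg_meas : Measurable g) (hg_nonneg : ∀ c, 0 ≤ g c)
    (hg_prob : ∫ c in Ioi (0:ℝ), g c = 1)
    (ω₁ ω₂ ω₃ : ℝ → ℝ)
    (hω₁_meas : Measurable ω₁) (hω₂_meas : Measurable ω₂) (hω₃_meas : Measurable ω₃)
    (hω₁_pos : ∀ᵐ c ∂(netMeasure g), 0 < ω₁ c)
    (hω₂_pos : ∀ᵐ c ∂(netMeasure g), 0 < ω₂ c)
    (hω₃_pos : ∀ᵐ c ∂(netMeasure g), 0 < ω₃ c)
    (hω₂_int : Integrable ω₂ (netMeasure g))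
    (hω₃_int : Integrable ω₃ (netMeasure g))
    (k : ℝ → ℝ) (hk_int : Integrable k (netMeasure g))
    (hk_pos : ∀ᵐ c ∂(netMeasure g), 0 < k c)
    (hω₂k_int : Integrable (fun c => ω₂ c * k c) (netMeasure g))
    (lam : ℝ) (hlam : lam < 0)
    (hpos : ∀ᵐ c ∂(netMeasure g),
      0 < lam + ω₁ c * (∫ c₁, ω₂ c₁ ∂(netMeasure g)) * (∫ c₂, ω₃ c₂ ∂(netMeasure g)) / 2)
    (heig : ∀ᵐ c ∂(netMeasure g),
      k c * (lam + ω₁ c * (∫ c₁, ω₂ c₁ ∂(netMeasure g)) * (∫ c₂, ω₃ c₂ ∂(netMeasure g)) / 2)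
        = ω₁ c * (∫ c₁, ω₂ c₁ * k c₁ ∂(netMeasure g)) * (∫ c₂, ω₃ c₂ ∂(netMeasure g))) :
    False := by
  set μ := netMeasure g with hμdef
  -- g is integrable on Ioi 0
  have hg_int : IntegrableOn g (Ioi (0:ℝ)) := by
    by_contra h
    rw [integral_undef h] at hg_prob
    norm_num at hg_prob
  -- μ is nonzero
  have hμ_univ : μ univ = 1 := by
    rw [hμdef, netMeasure, withDensity_apply _ MeasurableSet.univ, Measure.restrict_univ,
      ← ofReal_integral_eq_lintegral_ofReal hg_int
        (Filter.Eventually.of_forall fun c => hg_nonneg c), hg_prob]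
    norm_num
  have hμ_ne : μ ≠ 0 := by
    intro h
    rw [h] at hμ_univ
    simp at hμ_univ
  set A := ∫ c₁, ω₂ c₁ ∂μ with hA_def
  set B := ∫ c₂, ω₃ c₂ ∂μ with hB_def
  set K := ∫ c₁, ω₂ c₁ * k c₁ ∂μ with hK_def
  have hA : 0 < A := integral_pos_of_ae_pos hμ_ne _ hω₂_int hω₂_pos
  have hB : 0 < B := integral_pos_of_ae_pos hμ_ne _ hω₃_int hω₃_pos
  have hK : 0 < K := integral_pos_of_ae_pos hμ_ne _ hω₂k_int
    ((hω₂_pos.and hk_pos).mono fun c ⟨h1, h2⟩ => mul_pos h1 h2)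
  -- pointwise a.e.: ω₂ c * (2 * K / A) ≤ ω₂ c * k c
  have hle : ∀ᵐ c ∂μ, ω₂ c * (2 * K / A) ≤ ω₂ c * k c := by
    filter_upwards [hω₁_pos, hω₂_pos, hk_pos, heig] with c h1 h2 hk heq
    have hkey : 2 * K / A < k c := by
      rw [div_lt_iff₀ hA]
      nlinarith [mul_pos h1 hB, mul_pos hk (mul_pos h1 hB)]
    exact mul_le_mul_of_nonneg_left hkey.le h2.le
  have hmono : ∫ c, ω₂ c * (2 * K / A) ∂μ ≤ K :=
    integral_mono_ae (hω₂_int.mul_const _) hω₂k_int hle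
  rw [integral_mul_const] at hmono
  rw [← hA_def] at hmono
  have h2K : A * (2 * K / A) = 2 * K := by field_simp
  rw [h2K] at hmono
  linarith
end

section
/- General Relative Entropy dissipation inequality: let n, m ∈ L^∞(μ) with n ≥ 0 and m ≥ 0 satisfy Γ_B(c) n(c) = T_B n(c) and Γ_B(c) m(c) = T_B* m(c) for μ-a.e. c, let H : ℝ → ℝ be convex and differentiable, and let u : (0,∞) → ℝ be bounded and measurable. Then ∫₀^∞ ∫₀^∞ B(c,c₁) m(c) n(c₁) H′(u(c)) (u(c₁) − u(c)) dμ(c₁) dμ(c) ≤ 0. (This is the entropy dissipation term in the General Relative Entropy identity: the entropy ∫ m n H(h/n) dμ is nonincreasing along solutions of the linear scattering equation.) -/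
open MeasureTheory Set

/-- `Γ_B(c) := ∫₀^∞ B(c,c₁) g(c₁) dc₁`. -/
noncomputable def GamB (B : ℝ → ℝ → ℝ) (g : ℝ → ℝ) (c : ℝ) : ℝ :=
  ∫ c₁ in Ioi (0:ℝ), B c c₁ * g c₁

/-- `T_B h(c) := ∫₀^∞ B(c,c₁) h(c₁) g(c₁) dc₁`. -/
noncomputable def TB (B : ℝ → ℝ → ℝ) (g : ℝ → ℝ) (h : ℝ → ℝ) (c : ℝ) : ℝ :=
  ∫ c₁ in Ioi (0:ℝ), B c c₁ * h c₁ * g c₁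

/-- `T_B* m(c) := ∫₀^∞ B(c₁,c) m(c₁) g(c₁) dc₁`. -/
noncomputable def TBstar (B : ℝ → ℝ → ℝ) (g : ℝ → ℝ) (m : ℝ → ℝ) (c : ℝ) : ℝ :=
  ∫ c₁ in Ioi (0:ℝ), B c₁ c * m c₁ * g c₁

/-- Gradient inequality for convex differentiable functions. -/
lemma grad_ineq_aux {H : ℝ → ℝ} (hH_conv : ConvexOn ℝ Set.univ H)
    (hH_diff : Differentiable ℝ H) (a b : ℝ) :
    deriv H a * (b - a) ≤ H b - H a := by
  rcases lt_trichotomy a b with h | rfl | h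
  · have hs := hH_conv.deriv_le_slope (mem_univ a) (mem_univ b) h (hH_diff a)
    rw [slope_def_field] at hs
    have hb : (0:ℝ) < b - a := by linarith
    calc deriv H a * (b - a) ≤ (H b - H a) / (b - a) * (b - a) := by
          exact mul_le_mul_of_nonneg_right hs hb.le
      _ = H b - H a := by field_simp
  · simp
  · have hs := hH_conv.slope_le_deriv (mem_univ b) (mem_univ a) h (hH_diff a)
    rw [slope_def_field] at hs
    have hb : (0:ℝ) < a - b := by linarith
    have : (H a - H b) / (a - b) * (a - b) ≤ deriv H a * (a - b) :=
      mul_le_mul_of_nonneg_right hs hb.le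
    rw [div_mul_cancel₀ _ hb.ne'] at this
    nlinarith

/-- Conversion from `netMeasure` integrals to weighted Lebesgue integrals. -/
lemma netMeasure_integral (g : ℝ → ℝ) (hg_meas : Measurable g) (hg_nonneg : ∀ c, 0 ≤ g c)
    (f : ℝ → ℝ) : ∫ x, f x ∂(netMeasure g) = ∫ x in Ioi (0:ℝ), f x * g x := by
  have h1 : (fun c => ENNReal.ofReal (g c)) = fun c => ((g c).toNNReal : ENNReal) := rfl
  rw [netMeasure, h1, integral_withDensity_eq_integral_smul (hg_meas.real_toNNReal)]
  refine integral_congr_ae (Filter.Eventually.of_forall fun x => ?_)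
  simp [NNReal.smul_def, Real.coe_toNNReal _ (hg_nonneg x), mul_comm]

/-- General Relative Entropy dissipation inequality: for eigenfunctions `n, m` of the
scattering operator and its adjoint, a convex differentiable `H` and bounded measurable `u`,
the entropy dissipation term `∫∫ B m n₁ H′(u)(u₁ − u) dμ dμ` is nonpositive. -/
theorem general_relative_entropy_dissipation
    (g : ℝ → ℝ) (hg_meas : Measurable g) (hg_nonneg : ∀ c, 0 ≤ g c)
    (hg_prob : ∫ c in Ioi (0:ℝ), g c = 1)
    (B : ℝ → ℝ → ℝ) (hB_meas : Measurable (fun x : ℝ × ℝ => B x.1 x.2))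
    (hB_pos : ∀ᵐ x ∂((netMeasure g).prod (netMeasure g)), 0 < B x.1 x.2)
    (hB_bdd : ∃ C : ℝ, ∀ᵐ x ∂((netMeasure g).prod (netMeasure g)), |B x.1 x.2| ≤ C)
    (n m : ℝ → ℝ) (hn_meas : Measurable n) (hm_meas : Measurable m)
    (hn_bdd : ∃ C : ℝ, ∀ᵐ c ∂(netMeasure g), |n c| ≤ C)
    (hm_bdd : ∃ C : ℝ, ∀ᵐ c ∂(netMeasure g), |m c| ≤ C)
    (hn_nonneg : 0 ≤ᵐ[netMeasure g] n) (hm_nonneg : 0 ≤ᵐ[netMeasure g] m)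
    (hn_eig : ∀ᵐ c ∂(netMeasure g), GamB B g c * n c = TB B g n c)
    (hm_eig : ∀ᵐ c ∂(netMeasure g), GamB B g c * m c = TBstar B g m c)
    (H : ℝ → ℝ) (hH_conv : ConvexOn ℝ Set.univ H) (hH_diff : Differentiable ℝ H)
    (u : ℝ → ℝ) (hu_meas : Measurable u) (hu_bdd : ∃ C : ℝ, ∀ c, |u c| ≤ C) :
    ∫ c, (∫ c₁, B c c₁ * m c * n c₁ * deriv H (u c) * (u c₁ - u c) ∂(netMeasure g))
      ∂(netMeasure g) ≤ 0 := by
  set μ := netMeasure g with hμ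
  -- g is integrable
  have hg_int : IntegrableOn g (Ioi (0:ℝ)) := by
    by_contra hc
    rw [integral_undef hc] at hg_prob
    norm_num at hg_prob
  -- μ is a finite measure
  haveI : IsFiniteMeasure μ := by
    constructor
    rw [hμ, netMeasure, withDensity_apply _ MeasurableSet.univ, Measure.restrict_univ,
      ← ofReal_integral_eq_lintegral_ofReal hg_int
        (Filter.Eventually.of_forall fun x => hg_nonneg x), hg_prob]
    exact ENNReal.ofReal_lt_top
  set π := μ.prod μ with hπ
  -- lifting a.e. statements to the product
  have ae_fst : ∀ {p : ℝ → Prop}, (∀ᵐ c ∂μ, p c) → ∀ᵐ x ∂π, p x.1 := by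
    intro p hp
    exact Measure.quasiMeasurePreserving_fst.tendsto_ae.eventually hp
  have ae_snd : ∀ {p : ℝ → Prop}, (∀ᵐ c ∂μ, p c) → ∀ᵐ x ∂π, p x.2 := by
    intro p hp
    exact Measure.quasiMeasurePreserving_snd.tendsto_ae.eventually hp
  -- bounds
  obtain ⟨CB₀, hCB₀⟩ := hB_bdd
  obtain ⟨Cn₀, hCn₀⟩ := hn_bdd
  obtain ⟨Cm₀, hCm₀⟩ := hm_bdd
  obtain ⟨Cu, hCu⟩ := hu_bdd
  set CB := max CB₀ 0 with hCBdef
  set Cn := max Cn₀ 0 with hCndef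
  set Cm := max Cm₀ 0 with hCmdef
  have hCB : ∀ᵐ x ∂π, |B x.1 x.2| ≤ CB := hCB₀.mono fun x hx => hx.trans (le_max_left _ _)
  have hCn : ∀ᵐ c ∂μ, |n c| ≤ Cn := hCn₀.mono fun c hc => hc.trans (le_max_left _ _)
  have hCm : ∀ᵐ c ∂μ, |m c| ≤ Cm := hCm₀.mono fun c hc => hc.trans (le_max_left _ _)
  have hCB0 : 0 ≤ CB := le_max_right _ _
  have hCn0 : 0 ≤ Cn := le_max_right _ _
  have hCm0 : 0 ≤ Cm := le_max_right _ _
  have hCu0 : 0 ≤ Cu := (abs_nonneg _).trans (hCu 0)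
  have hu_mem : ∀ c, u c ∈ Icc (-Cu) Cu := fun c => by
    have := abs_le.mp (hCu c); exact ⟨this.1, this.2⟩
  -- bound on H ∘ u
  obtain ⟨CH, hCH⟩ := (isCompact_Icc (a := -Cu) (b := Cu)).exists_bound_of_continuousOn
    hH_diff.continuous.continuousOn
  have hHu : ∀ c, |H (u c)| ≤ CH := fun c => by
    simpa [Real.norm_eq_abs] using hCH (u c) (hu_mem c)
  have hCH0 : 0 ≤ CH := (abs_nonneg _).trans (hHu 0)
  -- bound on deriv H ∘ u
  have hmono : MonotoneOn (deriv H) univ :=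
    hH_conv.monotoneOn_deriv fun x _ => hH_diff x
  set CD := max |deriv H (-Cu)| |deriv H Cu| with hCDdef
  have hDu : ∀ c, |deriv H (u c)| ≤ CD := fun c => by
    have h1 : deriv H (-Cu) ≤ deriv H (u c) :=
      hmono (mem_univ _) (mem_univ _) (hu_mem c).1
    have h2 : deriv H (u c) ≤ deriv H Cu :=
      hmono (mem_univ _) (mem_univ _) (hu_mem c).2
    exact abs_le_max_abs_abs h1 h2
  have hCD0 : 0 ≤ CD := (abs_nonneg _).trans (hDu 0)
  -- the integrands on the product space
  set F : ℝ × ℝ → ℝ := fun x =>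
    B x.1 x.2 * m x.1 * n x.2 * deriv H (u x.1) * (u x.2 - u x.1) with hF
  set G₁ : ℝ × ℝ → ℝ := fun x => B x.1 x.2 * m x.1 * n x.2 * H (u x.2) with hG₁
  set G₂ : ℝ × ℝ → ℝ := fun x => B x.1 x.2 * m x.1 * n x.2 * H (u x.1) with hG₂
  have hmF : Measurable F :=
    ((((hB_meas.mul (hm_meas.comp measurable_fst)).mul
      (hn_meas.comp measurable_snd)).mul
      ((measurable_deriv H).comp (hu_meas.comp measurable_fst))).mul
      ((hu_meas.comp measurable_snd).sub (hu_meas.comp measurable_fst)))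
  have hmG₁ : Measurable G₁ :=
    (((hB_meas.mul (hm_meas.comp measurable_fst)).mul
      (hn_meas.comp measurable_snd)).mul
      ((hH_diff.continuous.measurable).comp (hu_meas.comp measurable_snd)))
  have hmG₂ : Measurable G₂ :=
    (((hB_meas.mul (hm_meas.comp measurable_fst)).mul
      (hn_meas.comp measurable_snd)).mul
      ((hH_diff.continuous.measurable).comp (hu_meas.comp measurable_fst)))
  have key : ∀ (f : ℝ × ℝ → ℝ), Measurable f → (∀ᵐ x ∂π, |f x| ≤ CB * Cm * Cn * (CD + CH) * (Cu + Cu + 1)) →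
      Integrable f π := by
    intro f hf hbdd
    refine Integrable.mono' (g := fun _ => CB * Cm * Cn * (CD + CH) * (Cu + Cu + 1)) (integrable_const _) hf.aestronglyMeasurable ?_
    filter_upwards [hbdd] with x hx
    simpa [Real.norm_eq_abs] using hx
  have hsub : ∀ c c₁ : ℝ, |u c₁ - u c| ≤ Cu + Cu := fun c c₁ => by
    calc |u c₁ - u c| ≤ |u c₁| + |u c| := abs_sub _ _
      _ ≤ Cu + Cu := add_le_add (hCu c₁) (hCu c)
  have hFbdd : ∀ᵐ x ∂π, |F x| ≤ CB * Cm * Cn * (CD + CH) * (Cu + Cu + 1) := by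
    filter_upwards [hCB, ae_fst hCm, ae_snd hCn] with x h1 h2 h3
    have : |F x| = |B x.1 x.2| * |m x.1| * |n x.2| * |deriv H (u x.1)| * |u x.2 - u x.1| := by
      simp [hF, abs_mul]
    rw [this]
    have hD := hDu x.1
    have hs := hsub x.1 x.2
    gcongr
    · linarith [hCH0]
    · linarith
  have hG₁bdd : ∀ᵐ x ∂π, |G₁ x| ≤ CB * Cm * Cn * (CD + CH) * (Cu + Cu + 1) := by
    filter_upwards [hCB, ae_fst hCm, ae_snd hCn] with x h1 h2 h3
    have : |G₁ x| = |B x.1 x.2| * |m x.1| * |n x.2| * |H (u x.2)| := by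
      simp [hG₁, abs_mul]
    rw [this]
    have hH2 := hHu x.2
    calc |B x.1 x.2| * |m x.1| * |n x.2| * |H (u x.2)| ≤ CB * Cm * Cn * (CD + CH) := by
          gcongr; linarith [hCD0]
      _ ≤ CB * Cm * Cn * (CD + CH) * (Cu + Cu + 1) := by
          nlinarith [mul_nonneg (mul_nonneg (mul_nonneg hCB0 hCm0) hCn0) (by linarith : (0:ℝ) ≤ CD + CH)]
  have hG₂bdd : ∀ᵐ x ∂π, |G₂ x| ≤ CB * Cm * Cn * (CD + CH) * (Cu + Cu + 1) := by
    filter_upwards [hCB, ae_fst hCm, ae_snd hCn] with x h1 h2 h3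
    have : |G₂ x| = |B x.1 x.2| * |m x.1| * |n x.2| * |H (u x.1)| := by
      simp [hG₂, abs_mul]
    rw [this]
    have hH2 := hHu x.1
    calc |B x.1 x.2| * |m x.1| * |n x.2| * |H (u x.1)| ≤ CB * Cm * Cn * (CD + CH) := by
          gcongr; linarith [hCD0]
      _ ≤ CB * Cm * Cn * (CD + CH) * (Cu + Cu + 1) := by
          nlinarith [mul_nonneg (mul_nonneg (mul_nonneg hCB0 hCm0) hCn0) (by linarith : (0:ℝ) ≤ CD + CH)]
  have hFint : Integrable F π := key F hmF hFbdd
  have hG₁int : Integrable G₁ π := key G₁ hmG₁ hG₁bdd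
  have hG₂int : Integrable G₂ π := key G₂ hmG₂ hG₂bdd
  -- Step 1: rewrite LHS as a product integral
  have step1 : ∫ c, (∫ c₁, B c c₁ * m c * n c₁ * deriv H (u c) * (u c₁ - u c) ∂μ) ∂μ
      = ∫ x, F x ∂π := by
    exact integral_integral hFint
  rw [step1]
  -- Step 2: F ≤ G₁ - G₂ a.e.
  have hFG : F ≤ᵐ[π] fun x => G₁ x - G₂ x := by
    filter_upwards [hB_pos, ae_fst hm_nonneg, ae_snd hn_nonneg] with x hB hm hn
    have hnn : 0 ≤ B x.1 x.2 * m x.1 * n x.2 :=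
      mul_nonneg (mul_nonneg hB.le hm) hn
    have hgrad := grad_ineq_aux hH_conv hH_diff (u x.1) (u x.2)
    calc F x = (B x.1 x.2 * m x.1 * n x.2) * (deriv H (u x.1) * (u x.2 - u x.1)) := by
          simp [hF]; ring
      _ ≤ (B x.1 x.2 * m x.1 * n x.2) * (H (u x.2) - H (u x.1)) :=
          mul_le_mul_of_nonneg_left hgrad hnn
      _ = G₁ x - G₂ x := by simp [hG₁, hG₂]; ring
  have step2 : ∫ x, F x ∂π ≤ ∫ x, G₁ x - G₂ x ∂π :=
    integral_mono_ae hFint (hG₁int.sub hG₂int) hFG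
  -- Step 3: ∫ G₁ = ∫ G₂
  have conv := netMeasure_integral g hg_meas hg_nonneg
  have hG₁eq : ∫ x, G₁ x ∂π = ∫ c, n c * H (u c) * (GamB B g c * m c) ∂μ := by
    rw [hπ, MeasureTheory.integral_prod_symm _ hG₁int]
    have h1 : ∀ c₁ : ℝ, ∫ c, G₁ (c, c₁) ∂μ = n c₁ * H (u c₁) * TBstar B g m c₁ := by
      intro c₁
      have e1 : ∫ c, G₁ (c, c₁) ∂μ = ∫ c, (n c₁ * H (u c₁)) * (B c c₁ * m c) ∂μ := by
        refine integral_congr_ae (Filter.Eventually.of_forall fun c => ?_)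
        simp only [hG₁]; ring
      rw [e1, integral_const_mul, conv (fun c => B c c₁ * m c)]
      rfl
    simp only [h1]
    refine integral_congr_ae ?_
    filter_upwards [hm_eig] with c hc
    rw [← hc]
  have hG₂eq : ∫ x, G₂ x ∂π = ∫ c, m c * H (u c) * (GamB B g c * n c) ∂μ := by
    rw [hπ, MeasureTheory.integral_prod _ hG₂int]
    have h1 : ∀ c : ℝ, ∫ c₁, G₂ (c, c₁) ∂μ = m c * H (u c) * TB B g n c := by
      intro c
      have e1 : ∫ c₁, G₂ (c, c₁) ∂μ = ∫ c₁, (m c * H (u c)) * (B c c₁ * n c₁) ∂μ := by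
        refine integral_congr_ae (Filter.Eventually.of_forall fun c₁ => ?_)
        simp only [hG₂]; ring
      rw [e1, integral_const_mul, conv (fun c₁ => B c c₁ * n c₁)]
      rfl
    simp only [h1]
    refine integral_congr_ae ?_
    filter_upwards [hn_eig] with c hc
    rw [← hc]
  have step3 : ∫ x, G₁ x - G₂ x ∂π = 0 := by
    rw [integral_sub hG₁int hG₂int, hG₁eq, hG₂eq]
    have : ∫ c, n c * H (u c) * (GamB B g c * m c) ∂μ
        = ∫ c, m c * H (u c) * (GamB B g c * n c) ∂μ := by
      refine integral_congr_ae (Filter.Eventually.of_forall fun c => ?_)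
      ring
    rw [this, sub_self]
  linarith [step2, step3.le, step3.ge]
end

section
/- Exponential convergence to the equilibrium ρ for the Ochrombel model: let m ∈ L^∞(μ), m ≥ 0, satisfy Γ_B(c) m(c) = T_B* m(c) for μ-a.e. c and ∫₀^∞ m dμ = 1, and suppose there exist measurable ψ : (0,∞) → (0,∞) and ν₂ > 0 with ν₂ ψ(c₁) ≤ B(c,c₁) for μ⊗μ-a.e. (c,c₁) and ν₁ := ∫₀^∞ m(c)²/ψ(c) dμ(c) < ∞. Let p̃ : (0,∞) × [0,∞) → ℝ be bounded and measurable, differentiable in t for each c with ∂ₜ p̃(c,t) = ½(T_B p̃(·,t)(c) − Γ_B(c) p̃(c,t)); set ρ := ∫₀^∞ m(c) p̃(c,0) dμ(c); and assume differentiation under the integral sign is valid, i.e. t ↦ ∫ m p̃(·,t) dμ is differentiable with derivative ∫ m ∂ₜp̃(·,t) dμ, and E(t) := ∫₀^∞ m(c)(p̃(c,t) − ρ)² dμ(c) is differentiable with E′(t) = ∫₀^∞ 2 m(c)(p̃(c,t) − ρ) ∂ₜp̃(c,t) dμ(c). Then ∫₀^∞ m(c) p̃(c,t) dμ(c) = ρ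 for all t ≥ 0, and there exists a constant ν > 0, depending only on ν₁ and ν₂, such that E(t) ≤ E(0) e^{−νt} for all t ≥ 0. Hence p̃^∞ ≡ ρ is the asymptotically stable equilibrium of the linear scattering equation. -/
open MeasureTheory Set Filter


private lemma young_aux {a b k : ℝ} (hk : 0 < k) :
    a * b ≤ a ^ 2 / (2 * k) + k * b ^ 2 / 2 := by
  have h2k : (0:ℝ) < 2 * k := by linarith
  have key : a * b - k * b ^ 2 / 2 ≤ a ^ 2 / (2 * k) := by
    rw [le_div_iff₀ h2k]
    nlinarith [sq_nonneg (a - k * b)]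
  linarith

private lemma pointwise_young {m1 m2 q1 q2 ψ2 ν₁ : ℝ} (hm1 : 0 ≤ m1) (hψ : 0 < ψ2)
    (hν : 0 < ν₁) :
    m1 * m2 * q1 * (q1 - q2) ≤
      (1 / (2 * ν₁)) * ((m1 * q1 ^ 2) * (m2 ^ 2 / ψ2)) +
        (ν₁ / 2) * (ψ2 * m1 * (q1 - q2) ^ 2) := by
  have h := young_aux (a := m2 * q1) (b := q1 - q2) (k := ν₁ * ψ2) (mul_pos hν hψ)
  have h2 := mul_le_mul_of_nonneg_left h hm1
  calc m1 * m2 * q1 * (q1 - q2) = m1 * (m2 * q1 * (q1 - q2)) := by ring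
    _ ≤ m1 * ((m2 * q1) ^ 2 / (2 * (ν₁ * ψ2)) + (ν₁ * ψ2) * (q1 - q2) ^ 2 / 2) := h2
    _ = (1 / (2 * ν₁)) * ((m1 * q1 ^ 2) * (m2 ^ 2 / ψ2)) +
        (ν₁ / 2) * (ψ2 * m1 * (q1 - q2) ^ 2) := by
        field_simp


private lemma abs_mul2_le {a b A B : ℝ} (ha : |a| ≤ A) (hb : |b| ≤ B) : |a * b| ≤ A * B := by
  rw [abs_mul]
  exact mul_le_mul ha hb (abs_nonneg b) ((abs_nonneg a).trans ha)

private lemma abs_mul3_le {a b c A B C : ℝ} (ha : |a| ≤ A) (hb : |b| ≤ B) (hc : |c| ≤ C) :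
    |a * b * c| ≤ A * B * C :=
  abs_mul2_le (abs_mul2_le ha hb) hc


/-- Right-hand side of the Ochrombel linear scattering equation
`∂ₜ p̃ = ½(T_B p̃ − Γ_B p̃)`. -/
noncomputable def ochRHS (B : ℝ → ℝ → ℝ) (g : ℝ → ℝ) (p : ℝ → ℝ → ℝ) (c t : ℝ) : ℝ :=
  (1/2) * (TB B g (fun c' => p c' t) c - GamB B g c * p c t)

set_option maxHeartbeats 2000000 in
/-- Exponential convergence to the equilibrium `ρ` for the Ochrombel model: along solutions
of the linear scattering equation, `∫ m p̃(·,t) dμ = ρ` is conserved and the weighted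
`L²` distance to `ρ` decays exponentially; hence `p̃^∞ ≡ ρ` is asymptotically stable. -/
theorem ochrombel_exponential_convergence
    (g : ℝ → ℝ) (hg_meas : Measurable g) (hg_nonneg : ∀ c, 0 ≤ g c)
    (hg_prob : ∫ c in Ioi (0:ℝ), g c = 1)
    (B : ℝ → ℝ → ℝ) (hB_meas : Measurable (fun x : ℝ × ℝ => B x.1 x.2))
    (hB_pos : ∀ᵐ x ∂((netMeasure g).prod (netMeasure g)), 0 < B x.1 x.2)
    (hB_bdd : ∃ C : ℝ, ∀ᵐ x ∂((netMeasure g).prod (netMeasure g)), |B x.1 x.2| ≤ C)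
    (m : ℝ → ℝ) (hm_meas : Measurable m)
    (hm_bdd : ∃ C : ℝ, ∀ᵐ c ∂(netMeasure g), |m c| ≤ C)
    (hm_nonneg : 0 ≤ᵐ[netMeasure g] m)
    (hm_eig : ∀ᵐ c ∂(netMeasure g), GamB B g c * m c = TBstar B g m c)
    (hm_norm : ∫ c, m c ∂(netMeasure g) = 1)
    (ψ : ℝ → ℝ) (hψ_meas : Measurable ψ) (hψ_pos : ∀ c, 0 < ψ c)
    (ν₂ : ℝ) (hν₂ : 0 < ν₂)
    (hlow : ∀ᵐ x ∂((netMeasure g).prod (netMeasure g)), ν₂ * ψ x.2 ≤ B x.1 x.2)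
    (hν₁_int : Integrable (fun c => (m c)^2 / ψ c) (netMeasure g))
    (p : ℝ → ℝ → ℝ)
    (hp_meas : Measurable (fun x : ℝ × ℝ => p x.1 x.2))
    (hp_bdd : ∃ C : ℝ, ∀ c t, |p c t| ≤ C)
    (hp_ode : ∀ c t, HasDerivAt (fun s => p c s) (ochRHS B g p c t) t)
    (ρ : ℝ) (hρ : ρ = ∫ c, m c * p c 0 ∂(netMeasure g))
    (hdiff_mass : ∀ t, HasDerivAt (fun s => ∫ c, m c * p c s ∂(netMeasure g))
      (∫ c, m c * ochRHS B g p c t ∂(netMeasure g)) t)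
    (hdiff_E : ∀ t, HasDerivAt (fun s => ∫ c, m c * (p c s - ρ)^2 ∂(netMeasure g))
      (∫ c, 2 * m c * (p c t - ρ) * ochRHS B g p c t ∂(netMeasure g)) t) :
    (∀ t : ℝ, 0 ≤ t → ∫ c, m c * p c t ∂(netMeasure g) = ρ) ∧
    (∃ ν : ℝ, 0 < ν ∧ ∀ t : ℝ, 0 ≤ t →
      (∫ c, m c * (p c t - ρ)^2 ∂(netMeasure g))
        ≤ (∫ c, m c * (p c 0 - ρ)^2 ∂(netMeasure g)) * Real.exp (-ν * t)) := by
  classical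
  set μ := netMeasure g with hμdef
  set π := μ.prod μ with hπdef
  -- `g` is integrable on `(0,∞)`
  have hg_int : IntegrableOn g (Ioi (0:ℝ)) := by
    by_contra h
    rw [MeasureTheory.integral_undef h] at hg_prob
    norm_num at hg_prob
  -- `μ` is a probability measure
  have hμ_univ : μ univ = 1 := by
    rw [hμdef]
    rw [netMeasure, withDensity_apply _ MeasurableSet.univ, Measure.restrict_univ,
      ← ofReal_integral_eq_lintegral_ofReal hg_int (Eventually.of_forall fun c => hg_nonneg c),
      hg_prob]
    simp
  haveI hprob : IsProbabilityMeasure μ := ⟨hμ_univ⟩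
  -- conversion between `μ`-integrals and weighted Lebesgue integrals
  have hconv : ∀ h : ℝ → ℝ, ∫ c, h c ∂μ = ∫ c in Ioi (0:ℝ), g c * h c := by
    intro h
    rw [hμdef]
    rw [netMeasure,
      show (fun c => ENNReal.ofReal (g c)) = (fun c => ((g c).toNNReal : ENNReal)) from rfl,
      integral_withDensity_eq_integral_smul hg_meas.real_toNNReal]
    refine integral_congr_ae (Eventually.of_forall fun c => ?_)
    simp [NNReal.smul_def, Real.coe_toNNReal _ (hg_nonneg c)]
  -- operator conversions
  have hGam : ∀ c, (∫ c₁, B c c₁ ∂μ) = GamB B g c := fun c => by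
    rw [hconv fun c₁ => B c c₁, GamB]
    exact integral_congr_ae (Eventually.of_forall fun c₁ => mul_comm _ _)
  have hTBf : ∀ (f : ℝ → ℝ) c, (∫ c₁, B c c₁ * f c₁ ∂μ) = TB B g f c := fun f c => by
    rw [hconv fun c₁ => B c c₁ * f c₁, TB]
    exact integral_congr_ae (Eventually.of_forall fun c₁ => by ring)
  have hTBstarf : ∀ c, (∫ c₁, B c₁ c * m c₁ ∂μ) = TBstar B g m c := fun c => by
    rw [hconv fun c₁ => B c₁ c * m c₁, TBstar]
    exact integral_congr_ae (Eventually.of_forall fun c₁ => by ring)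
  -- bounds, made nonnegative
  obtain ⟨CB₀, hCB₀⟩ := hB_bdd
  obtain ⟨Cm₀, hCm₀⟩ := hm_bdd
  obtain ⟨Cp₀, hCp₀⟩ := hp_bdd
  set CB := max CB₀ 0 with hCBdef
  set Cm := max Cm₀ 0 with hCmdef
  set Cp := max Cp₀ 0 with hCpdef
  have hCB0 : 0 ≤ CB := le_max_right _ _
  have hCm0 : 0 ≤ Cm := le_max_right _ _
  have hCp0 : 0 ≤ Cp := le_max_right _ _
  have hCB : ∀ᵐ z ∂π, |B z.1 z.2| ≤ CB := hCB₀.mono fun z h => h.trans (le_max_left _ _)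
  have hCm : ∀ᵐ c ∂μ, |m c| ≤ Cm := hCm₀.mono fun c h => h.trans (le_max_left _ _)
  have hCp : ∀ c t, |p c t| ≤ Cp := fun c t => (hCp₀ c t).trans (le_max_left _ _)
  -- a.e. lifting to the product
  have aefst : ∀ {P : ℝ → Prop}, (∀ᵐ c ∂μ, P c) → (∀ᵐ z ∂π, P z.1) := fun h =>
    Measure.quasiMeasurePreserving_fst.ae h
  have aesnd : ∀ {P : ℝ → Prop}, (∀ᵐ c ∂μ, P c) → (∀ᵐ z ∂π, P z.2) := fun h =>
    Measure.quasiMeasurePreserving_snd.ae h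
  have aeswap : ∀ {P : ℝ × ℝ → Prop}, (∀ᵐ z ∂π, P z) → (∀ᵐ z ∂π, P z.swap) := fun h =>
    ((Measure.measurePreserving_swap (μ := μ) (ν := μ)).quasiMeasurePreserving.ae h)
  have hm_nn : ∀ᵐ c ∂μ, 0 ≤ m c := hm_nonneg.mono fun c hc => by simpa using hc
  have hm1b : ∀ᵐ z ∂π, |m z.1| ≤ Cm := aefst hCm
  have hm2b : ∀ᵐ z ∂π, |m z.2| ≤ Cm := aesnd hCm
  have hm1nn : ∀ᵐ z ∂π, 0 ≤ m z.1 := aefst hm_nn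
  have hCBs : ∀ᵐ z ∂π, |B z.2 z.1| ≤ CB := aeswap hCB
  -- integrability helpers
  have hintμ : ∀ f : ℝ → ℝ, AEStronglyMeasurable f μ →
      (∃ C, ∀ᵐ c ∂μ, |f c| ≤ C) → Integrable f μ := by
    rintro f hf ⟨C, hC⟩
    exact (integrable_const C).mono' hf (hC.mono fun c h => by simpa using h)
  have hintπ : ∀ f : ℝ × ℝ → ℝ, AEStronglyMeasurable f π →
      (∃ C, ∀ᵐ z ∂π, |f z| ≤ C) → Integrable f π := by
    rintro f hf ⟨C, hC⟩
    exact (integrable_const C).mono' hf (hC.mono fun z h => by simpa using h)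
  -- measurability helpers
  have mB : Measurable fun z : ℝ × ℝ => B z.1 z.2 := hB_meas
  have mBs : Measurable fun z : ℝ × ℝ => B z.2 z.1 := hB_meas.comp measurable_swap
  have mm1 : Measurable fun z : ℝ × ℝ => m z.1 := hm_meas.comp measurable_fst
  have mm2 : Measurable fun z : ℝ × ℝ => m z.2 := hm_meas.comp measurable_snd
  have mψ2 : Measurable fun z : ℝ × ℝ => ψ z.2 := hψ_meas.comp measurable_snd
  have mpt : ∀ t, Measurable fun c => p c t := fun t =>
    hp_meas.comp (measurable_id.prodMk measurable_const)
  -- gluing by pointwise (ring) identities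
  have glueμ : ∀ F G : ℝ → ℝ, (∀ c, F c = G c) → ∫ c, F c ∂μ = ∫ c, G c ∂μ :=
    fun F G h => integral_congr_ae (Eventually.of_forall h)
  have glueπ : ∀ F G : ℝ × ℝ → ℝ, (∀ z, F z = G z) → ∫ z, F z ∂π = ∫ z, G z ∂π :=
    fun F G h => integral_congr_ae (Eventually.of_forall h)
  -- the fundamental swap identity coming from the eigenvalue equation
  have hswap : ∀ f : ℝ → ℝ, Measurable f → (∃ Cf, 0 ≤ Cf ∧ ∀ c, |f c| ≤ Cf) →
      ∫ z, B z.1 z.2 * m z.1 * f z.1 ∂π = ∫ z, B z.1 z.2 * m z.1 * f z.2 ∂π := by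
    rintro f hf ⟨Cf, hCf0, hCf⟩
    have hK1 : Integrable (fun z : ℝ × ℝ => B z.1 z.2 * m z.1 * f z.1) π := by
      refine hintπ _ ((mB.mul mm1).mul (hf.comp measurable_fst)).aestronglyMeasurable
        ⟨CB * Cm * Cf, ?_⟩
      filter_upwards [hCB, hm1b] with z h1 h2
      exact abs_mul3_le h1 h2 (hCf _)
    have hK2 : Integrable (fun z : ℝ × ℝ => B z.2 z.1 * m z.2 * f z.1) π := by
      refine hintπ _ ((mBs.mul mm2).mul (hf.comp measurable_fst)).aestronglyMeasurable
        ⟨CB * Cm * Cf, ?_⟩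
      filter_upwards [hCBs, hm2b] with z h1 h2
      exact abs_mul3_le h1 h2 (hCf _)
    calc ∫ z, B z.1 z.2 * m z.1 * f z.1 ∂π
        = ∫ c, ∫ c₁, B c c₁ * m c * f c ∂μ ∂μ := integral_prod _ hK1
      _ = ∫ c, GamB B g c * m c * f c ∂μ := by
          refine glueμ _ _ fun c => ?_
          have h1 : (∫ c₁, B c c₁ * m c * f c ∂μ) = (∫ c₁, B c c₁ ∂μ) * (m c * f c) := by
            rw [← integral_mul_const]
            exact integral_congr_ae (Eventually.of_forall fun c₁ => by ring)
          rw [h1, hGam c]; ring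
      _ = ∫ c, TBstar B g m c * f c ∂μ := by
          refine integral_congr_ae ?_
          filter_upwards [hm_eig] with c hc
          rw [← hc]
      _ = ∫ c, ∫ c₁, B c₁ c * m c₁ * f c ∂μ ∂μ := by
          refine glueμ _ _ fun c => ?_
          rw [← hTBstarf c, ← integral_mul_const]
      _ = ∫ z, B z.2 z.1 * m z.2 * f z.1 ∂π := (integral_prod _ hK2).symm
      _ = ∫ z, B z.1 z.2 * m z.1 * f z.2 ∂π :=
          (integral_prod_swap fun z : ℝ × ℝ => B z.2 z.1 * m z.2 * f z.1).symm
  -- left operator: Fubini to the product measure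
  have hleft2 : ∀ u f : ℝ → ℝ, Measurable u → Measurable f →
      (∃ Cu, 0 ≤ Cu ∧ ∀ c, |u c| ≤ Cu) → (∃ Cf, 0 ≤ Cf ∧ ∀ c, |f c| ≤ Cf) →
      Integrable (fun c => (m c * u c) * TB B g f c) μ ∧
      ∫ c, (m c * u c) * TB B g f c ∂μ = ∫ z, B z.1 z.2 * (m z.1 * u z.1) * f z.2 ∂π := by
    rintro u f hu hf ⟨Cu, hCu0, hCu⟩ ⟨Cf, hCf0, hCf⟩
    have hK : Integrable (fun z : ℝ × ℝ => B z.1 z.2 * (m z.1 * u z.1) * f z.2) π := by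
      refine hintπ _ ((mB.mul (mm1.mul (hu.comp measurable_fst))).mul
        (hf.comp measurable_snd)).aestronglyMeasurable ⟨CB * (Cm * Cu) * Cf, ?_⟩
      filter_upwards [hCB, hm1b] with z h1 h2
      exact abs_mul3_le h1 (abs_mul2_le h2 (hCu _)) (hCf _)
    have hptw : ∀ c, (∫ c₁, B c c₁ * (m c * u c) * f c₁ ∂μ) = (m c * u c) * TB B g f c := by
      intro c
      rw [← hTBf f c, ← integral_const_mul]
      exact integral_congr_ae (Eventually.of_forall fun c₁ => by ring)
    constructor
    · exact hK.integral_prod_left.congr (Eventually.of_forall fun c => hptw c)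
    · rw [integral_prod _ hK]
      exact glueμ _ _ fun c => (hptw c).symm
  -- right operator: Fubini to the product measure
  have hright2 : ∀ u f : ℝ → ℝ, Measurable u → Measurable f →
      (∃ Cu, 0 ≤ Cu ∧ ∀ c, |u c| ≤ Cu) → (∃ Cf, 0 ≤ Cf ∧ ∀ c, |f c| ≤ Cf) →
      Integrable (fun c => (m c * u c) * (GamB B g c * f c)) μ ∧
      ∫ c, (m c * u c) * (GamB B g c * f c) ∂μ
        = ∫ z, B z.1 z.2 * (m z.1 * u z.1) * f z.1 ∂π := by
    rintro u f hu hf ⟨Cu, hCu0, hCu⟩ ⟨Cf, hCf0, hCf⟩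
    have hK : Integrable (fun z : ℝ × ℝ => B z.1 z.2 * (m z.1 * u z.1) * f z.1) π := by
      refine hintπ _ ((mB.mul (mm1.mul (hu.comp measurable_fst))).mul
        (hf.comp measurable_fst)).aestronglyMeasurable ⟨CB * (Cm * Cu) * Cf, ?_⟩
      filter_upwards [hCB, hm1b] with z h1 h2
      exact abs_mul3_le h1 (abs_mul2_le h2 (hCu _)) (hCf _)
    have hptw : ∀ c, (∫ c₁, B c c₁ * (m c * u c) * f c ∂μ)
        = (m c * u c) * (GamB B g c * f c) := by
      intro c
      have h1 : (∫ c₁, B c c₁ * (m c * u c) * f c ∂μ)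
          = (∫ c₁, B c c₁ ∂μ) * ((m c * u c) * f c) := by
        rw [← integral_mul_const]
        exact integral_congr_ae (Eventually.of_forall fun c₁ => by ring)
      rw [h1, hGam c]; ring
    constructor
    · exact hK.integral_prod_left.congr (Eventually.of_forall fun c => hptw c)
    · rw [integral_prod _ hK]
      exact glueμ _ _ fun c => (hptw c).symm
  -- mass conservation
  have hbdd1 : ∃ Cu, 0 ≤ Cu ∧ ∀ c : ℝ, |(fun _ : ℝ => (1:ℝ)) c| ≤ 1 := ⟨1, by norm_num, fun c => by norm_num⟩
  have hmass0 : ∀ t, (∫ c, m c * ochRHS B g p c t ∂μ) = 0 := by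
    intro t
    obtain ⟨int1, eq1⟩ := hleft2 (fun _ => (1:ℝ)) (fun c' => p c' t) measurable_const (mpt t)
      ⟨1, by norm_num, fun c => by norm_num⟩ ⟨Cp, hCp0, fun c => hCp c t⟩
    obtain ⟨int2, eq2⟩ := hright2 (fun _ => (1:ℝ)) (fun c' => p c' t) measurable_const (mpt t)
      ⟨1, by norm_num, fun c => by norm_num⟩ ⟨Cp, hCp0, fun c => hCp c t⟩
    have e3 : ∫ z, B z.1 z.2 * (m z.1 * (1:ℝ)) * p z.2 t ∂π
        = ∫ z, B z.1 z.2 * m z.1 * p z.2 t ∂π := glueπ _ _ fun z => by ring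
    have e4 : ∫ z, B z.1 z.2 * (m z.1 * (1:ℝ)) * p z.1 t ∂π
        = ∫ z, B z.1 z.2 * m z.1 * p z.1 t ∂π := glueπ _ _ fun z => by ring
    have e5 := hswap (fun c => p c t) (mpt t) ⟨Cp, hCp0, fun c => hCp c t⟩
    calc ∫ c, m c * ochRHS B g p c t ∂μ
        = ∫ c, (1/2) * ((m c * (1:ℝ)) * TB B g (fun c' => p c' t) c
            - (m c * (1:ℝ)) * (GamB B g c * p c t)) ∂μ := by
          refine glueμ _ _ fun c => ?_
          simp only [ochRHS]
          ring
      _ = (1/2) * ((∫ c, (m c * (1:ℝ)) * TB B g (fun c' => p c' t) c ∂μ)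
            - ∫ c, (m c * (1:ℝ)) * (GamB B g c * p c t) ∂μ) := by
          rw [integral_const_mul, integral_sub int1 int2]
      _ = 0 := by
          rw [eq1, eq2, e3, e4, ← e5]
          ring
  have hM : ∀ t, (∫ c, m c * p c t ∂μ) = ρ := by
    have hd : ∀ t, HasDerivAt (fun s => ∫ c, m c * p c s ∂μ) 0 t := fun t => by
      have h := hdiff_mass t
      rwa [hmass0 t] at h
    intro t
    have hc := is_const_of_deriv_eq_zero (f := fun s => ∫ c, m c * p c s ∂μ)
      (fun s => (hd s).differentiableAt) (fun s => (hd s).deriv) t 0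
    rw [hc, hρ]
  -- basic integrabilities
  have hm_int : Integrable m μ := hintμ m hm_meas.aestronglyMeasurable ⟨Cm, hCm⟩
  have hmp_int : ∀ t, Integrable (fun c => m c * p c t) μ := fun t =>
    hintμ _ (hm_meas.mul (mpt t)).aestronglyMeasurable
      ⟨Cm * Cp, hCm.mono fun c h => abs_mul2_le h (hCp c t)⟩
  have hq0 : ∀ t, ∫ c, m c * (p c t - ρ) ∂μ = 0 := by
    intro t
    have h1 : (fun c => m c * (p c t - ρ)) = fun c => m c * p c t - m c * ρ :=
      funext fun c => by ring
    rw [h1, integral_sub (hmp_int t) (hm_int.mul_const ρ), hM t, integral_mul_const, hm_norm]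
    ring
  -- positivity of ν₁
  set ν₁ := ∫ c, m c ^ 2 / ψ c ∂μ with hν₁def
  have hν₁nonnegae : 0 ≤ᵐ[μ] fun c => m c ^ 2 / ψ c :=
    Eventually.of_forall fun c => div_nonneg (sq_nonneg _) (hψ_pos c).le
  have hν₁pos : 0 < ν₁ := by
    rcases (integral_nonneg_of_ae hν₁nonnegae).lt_or_eq with h | h
    · exact h
    · exfalso
      have h0 : (fun c => m c ^ 2 / ψ c) =ᵐ[μ] 0 :=
        (integral_eq_zero_iff_of_nonneg_ae hν₁nonnegae hν₁_int).mp h.symm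
      have hm0 : m =ᵐ[μ] 0 := by
        refine h0.mono fun c hc => ?_
        have hψc := hψ_pos c
        have hsq : m c ^ 2 = 0 := by
          rcases div_eq_zero_iff.mp hc with h' | h'
          · exact h'
          · exact absurd h' hψc.ne'
        have : m c = 0 := by
          have := pow_eq_zero_iff (n := 2) (by norm_num) |>.mp hsq
          exact this
        simpa using this
      rw [integral_congr_ae hm0] at hm_norm
      simp at hm_norm
  have habs_sub : ∀ a b : ℝ, |a - b| ≤ |a| + |b| := fun a b => by
    rw [sub_eq_add_neg]
    exact (abs_add_le _ _).trans_eq (by rw [abs_neg])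
  -- the dissipation estimate for the weighted L² distance
  have hEderiv : ∀ t, (∫ c, 2 * m c * (p c t - ρ) * ochRHS B g p c t ∂μ)
      ≤ -(ν₂ / (2 * ν₁)) * ∫ c, m c * (p c t - ρ)^2 ∂μ := by
    intro t
    have hq_meas : Measurable fun c => p c t - ρ := (mpt t).sub measurable_const
    set Cq := Cp + |ρ| with hCqdef
    have hCq0 : 0 ≤ Cq := add_nonneg hCp0 (abs_nonneg _)
    have hq_bdd : ∀ c, |p c t - ρ| ≤ Cq :=
      fun c => (habs_sub _ _).trans (add_le_add_left (hCp c t) _)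
    have hqsq_bdd : ∀ c, |(p c t - ρ)^2| ≤ Cq^2 := fun c => by
      rw [abs_pow]
      exact pow_le_pow_left₀ (abs_nonneg _) (hq_bdd c) 2
    have hΔ_bdd : ∀ z : ℝ × ℝ, |(p z.1 t - ρ) - (p z.2 t - ρ)| ≤ 2 * Cq := fun z =>
      (habs_sub _ _).trans (by have := hq_bdd z.1; have := hq_bdd z.2; linarith)
    have hΔsq_bdd : ∀ z : ℝ × ℝ, |((p z.1 t - ρ) - (p z.2 t - ρ))^2| ≤ (2*Cq)^2 := fun z => by
      rw [abs_pow]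
      exact pow_le_pow_left₀ (abs_nonneg _) (hΔ_bdd z) 2
    have hq1m : Measurable fun z : ℝ × ℝ => p z.1 t - ρ := hq_meas.comp measurable_fst
    have hq2m : Measurable fun z : ℝ × ℝ => p z.2 t - ρ := hq_meas.comp measurable_snd
    have hΔm : Measurable fun z : ℝ × ℝ => (p z.1 t - ρ) - (p z.2 t - ρ) := hq1m.sub hq2m
    -- integrabilities on the product
    have intT0 : Integrable (fun z : ℝ × ℝ => B z.1 z.2 * (m z.1 * (p z.1 t - ρ))) π := by
      refine hintπ _ (mB.mul (mm1.mul hq1m)).aestronglyMeasurable ⟨CB * (Cm * Cq), ?_⟩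
      filter_upwards [hCB, hm1b] with z h1 h2
      exact abs_mul2_le h1 (abs_mul2_le h2 (hq_bdd _))
    have intT11 : Integrable
        (fun z : ℝ × ℝ => B z.1 z.2 * (m z.1 * (p z.1 t - ρ)) * (p z.2 t - ρ)) π := by
      refine hintπ _ ((mB.mul (mm1.mul hq1m)).mul hq2m).aestronglyMeasurable
        ⟨CB * (Cm * Cq) * Cq, ?_⟩
      filter_upwards [hCB, hm1b] with z h1 h2
      exact abs_mul3_le h1 (abs_mul2_le h2 (hq_bdd _)) (hq_bdd _)
    have intT20' : Integrable
        (fun z : ℝ × ℝ => B z.1 z.2 * (m z.1 * (p z.1 t - ρ)) * (p z.1 t - ρ)) π := by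
      refine hintπ _ ((mB.mul (mm1.mul hq1m)).mul hq1m).aestronglyMeasurable
        ⟨CB * (Cm * Cq) * Cq, ?_⟩
      filter_upwards [hCB, hm1b] with z h1 h2
      exact abs_mul3_le h1 (abs_mul2_le h2 (hq_bdd _)) (hq_bdd _)
    have intT20 : Integrable (fun z : ℝ × ℝ => B z.1 z.2 * m z.1 * (p z.1 t - ρ)^2) π := by
      refine hintπ _ ((mB.mul mm1).mul (hq1m.pow_const 2)).aestronglyMeasurable
        ⟨CB * Cm * Cq^2, ?_⟩
      filter_upwards [hCB, hm1b] with z h1 h2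
      exact abs_mul3_le h1 h2 (hqsq_bdd _)
    have intT02 : Integrable (fun z : ℝ × ℝ => B z.1 z.2 * m z.1 * (p z.2 t - ρ)^2) π := by
      refine hintπ _ ((mB.mul mm1).mul (hq2m.pow_const 2)).aestronglyMeasurable
        ⟨CB * Cm * Cq^2, ?_⟩
      filter_upwards [hCB, hm1b] with z h1 h2
      exact abs_mul3_le h1 h2 (hqsq_bdd _)
    have intBΔ : Integrable
        (fun z : ℝ × ℝ => B z.1 z.2 * m z.1 * ((p z.1 t - ρ) - (p z.2 t - ρ))^2) π := by
      refine hintπ _ ((mB.mul mm1).mul (hΔm.pow_const 2)).aestronglyMeasurable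
        ⟨CB * Cm * (2*Cq)^2, ?_⟩
      filter_upwards [hCB, hm1b] with z h1 h2
      exact abs_mul3_le h1 h2 (hΔsq_bdd _)
    have hmq_int : Integrable (fun c => m c * (p c t - ρ)) μ :=
      hintμ _ (hm_meas.mul hq_meas).aestronglyMeasurable
        ⟨Cm * Cq, hCm.mono fun c h => abs_mul2_le h (hq_bdd c)⟩
    have hmq2_int : Integrable (fun c => m c * (p c t - ρ)^2) μ :=
      hintμ _ (hm_meas.mul (hq_meas.pow_const 2)).aestronglyMeasurable
        ⟨Cm * Cq^2, hCm.mono fun c h => abs_mul2_le h (hqsq_bdd c)⟩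
    obtain ⟨int1, eq1⟩ := hleft2 (fun c => p c t - ρ) (fun c' => p c' t) hq_meas (mpt t)
      ⟨Cq, hCq0, hq_bdd⟩ ⟨Cp, hCp0, fun c => hCp c t⟩
    obtain ⟨int2, eq2⟩ := hright2 (fun c => p c t - ρ) (fun c' => p c' t) hq_meas (mpt t)
      ⟨Cq, hCq0, hq_bdd⟩ ⟨Cp, hCp0, fun c => hCp c t⟩
    -- abbreviations
    set S11 := ∫ z : ℝ × ℝ, B z.1 z.2 * (m z.1 * (p z.1 t - ρ)) * (p z.2 t - ρ) ∂π with hS11def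
    set T20 := ∫ z : ℝ × ℝ, B z.1 z.2 * m z.1 * (p z.1 t - ρ)^2 ∂π with hT20def
    set T02 := ∫ z : ℝ × ℝ, B z.1 z.2 * m z.1 * (p z.2 t - ρ)^2 ∂π with hT02def
    set SΔ := ∫ z : ℝ × ℝ, B z.1 z.2 * m z.1 * ((p z.1 t - ρ) - (p z.2 t - ρ))^2 ∂π with hSΔdef
    set Dψ := ∫ z : ℝ × ℝ, ψ z.2 * m z.1 * ((p z.1 t - ρ) - (p z.2 t - ρ))^2 ∂π with hDψdef
    set Et := ∫ c, m c * (p c t - ρ)^2 ∂μ with hEtdef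
    -- decompose p = q + ρ inside the two operator integrals
    have hA1 : ∫ z : ℝ × ℝ, B z.1 z.2 * (m z.1 * (p z.1 t - ρ)) * p z.2 t ∂π
        = S11 + ρ * ∫ z : ℝ × ℝ, B z.1 z.2 * (m z.1 * (p z.1 t - ρ)) ∂π := by
      rw [hS11def, ← integral_const_mul, ← integral_add intT11 (intT0.const_mul ρ)]
      exact glueπ _ _ fun z => by ring
    have hA2 : ∫ z : ℝ × ℝ, B z.1 z.2 * (m z.1 * (p z.1 t - ρ)) * p z.1 t ∂π
        = (∫ z : ℝ × ℝ, B z.1 z.2 * (m z.1 * (p z.1 t - ρ)) * (p z.1 t - ρ) ∂π)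
          + ρ * ∫ z : ℝ × ℝ, B z.1 z.2 * (m z.1 * (p z.1 t - ρ)) ∂π := by
      rw [← integral_const_mul, ← integral_add intT20' (intT0.const_mul ρ)]
      exact glueπ _ _ fun z => by ring
    have hS20'' : ∫ z : ℝ × ℝ, B z.1 z.2 * (m z.1 * (p z.1 t - ρ)) * (p z.1 t - ρ) ∂π
        = T20 := by
      rw [hT20def]
      exact glueπ _ _ fun z => by ring
    have hE'eq : (∫ c, 2 * m c * (p c t - ρ) * ochRHS B g p c t ∂μ) = S11 - T20 := by
      rw [glueμ _ (fun c => (m c * (p c t - ρ)) * TB B g (fun c' => p c' t) c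
            - (m c * (p c t - ρ)) * (GamB B g c * p c t))
          (fun c => by simp only [ochRHS]; ring),
        integral_sub int1 int2, eq1, eq2, hA1, hA2, hS20'']
      ring
    have hT42 : T20 = T02 := by
      rw [hT20def, hT02def]
      exact hswap (fun c => (p c t - ρ)^2) (hq_meas.pow_const 2) ⟨Cq^2, sq_nonneg _, hqsq_bdd⟩
    have i1 : Integrable (fun z : ℝ × ℝ => B z.1 z.2 * m z.1 * (p z.1 t - ρ)^2
        - 2 * (B z.1 z.2 * (m z.1 * (p z.1 t - ρ)) * (p z.2 t - ρ))) π :=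
      intT20.sub (intT11.const_mul 2)
    have hexp : SΔ = T20 - 2 * S11 + T02 := by
      rw [hSΔdef, hT20def, hT02def, hS11def, ← integral_const_mul,
        ← integral_sub intT20 (intT11.const_mul 2),
        ← integral_add i1 intT02]
      exact glueπ _ _ fun z => by ring
    have hE'2 : (∫ c, 2 * m c * (p c t - ρ) * ochRHS B g p c t ∂μ) = -(1/2) * SΔ := by
      rw [hE'eq]
      linarith
    -- lower bound the dissipation by the ψ-weighted quantity
    have haeL : ∀ᵐ z ∂π, ν₂ * (ψ z.2 * m z.1 * ((p z.1 t - ρ) - (p z.2 t - ρ))^2)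
        ≤ B z.1 z.2 * m z.1 * ((p z.1 t - ρ) - (p z.2 t - ρ))^2 := by
      filter_upwards [hlow, hm1nn] with z h1 h2
      have hΔ : 0 ≤ m z.1 * ((p z.1 t - ρ) - (p z.2 t - ρ))^2 := mul_nonneg h2 (sq_nonneg _)
      calc ν₂ * (ψ z.2 * m z.1 * ((p z.1 t - ρ) - (p z.2 t - ρ))^2)
          = (ν₂ * ψ z.2) * (m z.1 * ((p z.1 t - ρ) - (p z.2 t - ρ))^2) := by ring
        _ ≤ B z.1 z.2 * (m z.1 * ((p z.1 t - ρ) - (p z.2 t - ρ))^2) :=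
            mul_le_mul_of_nonneg_right h1 hΔ
        _ = B z.1 z.2 * m z.1 * ((p z.1 t - ρ) - (p z.2 t - ρ))^2 := by ring
    have intDψ : Integrable
        (fun z : ℝ × ℝ => ψ z.2 * m z.1 * ((p z.1 t - ρ) - (p z.2 t - ρ))^2) π := by
      refine (intBΔ.const_mul ν₂⁻¹).mono'
        ((mψ2.mul mm1).mul (hΔm.pow_const 2)).aestronglyMeasurable ?_
      filter_upwards [haeL, hm1nn] with z h1 h2
      have h3 : 0 ≤ ψ z.2 * m z.1 * ((p z.1 t - ρ) - (p z.2 t - ρ))^2 :=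
        mul_nonneg (mul_nonneg (hψ_pos _).le h2) (sq_nonneg _)
      rw [Real.norm_eq_abs, abs_of_nonneg h3]
      have h4 := mul_le_mul_of_nonneg_left h1 (inv_nonneg.mpr hν₂.le)
      rwa [← mul_assoc, inv_mul_cancel₀ hν₂.ne', one_mul] at h4
    have hν₂D : ν₂ * Dψ ≤ SΔ := by
      rw [hDψdef, hSΔdef, ← integral_const_mul]
      exact integral_mono_ae (intDψ.const_mul ν₂) intBΔ haeL
    -- Et in product form and the Young estimate
    have hf1 : Integrable (fun z : ℝ × ℝ => (m z.1 * (p z.1 t - ρ)^2) * m z.2) π :=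
      hmq2_int.mul_prod hm_int
    have hf2 : Integrable
        (fun z : ℝ × ℝ => (m z.1 * (p z.1 t - ρ)) * (m z.2 * (p z.2 t - ρ))) π :=
      hmq_int.mul_prod hmq_int
    have hEt_eq : Et = ∫ z : ℝ × ℝ,
        m z.1 * m z.2 * (p z.1 t - ρ) * ((p z.1 t - ρ) - (p z.2 t - ρ)) ∂π := by
      have e1 : ∫ z : ℝ × ℝ, (m z.1 * (p z.1 t - ρ)^2) * m z.2 ∂π
          = (∫ c, m c * (p c t - ρ)^2 ∂μ) * ∫ c, m c ∂μ :=
        integral_prod_mul (f := fun c => m c * (p c t - ρ)^2) (g := m)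
      have e2 : ∫ z : ℝ × ℝ, (m z.1 * (p z.1 t - ρ)) * (m z.2 * (p z.2 t - ρ)) ∂π
          = (∫ c, m c * (p c t - ρ) ∂μ) * ∫ c, m c * (p c t - ρ) ∂μ :=
        integral_prod_mul (f := fun c => m c * (p c t - ρ)) (g := fun c => m c * (p c t - ρ))
      calc Et = Et * 1 - 0 * 0 := by ring
        _ = (∫ z : ℝ × ℝ, (m z.1 * (p z.1 t - ρ)^2) * m z.2 ∂π)
            - ∫ z : ℝ × ℝ, (m z.1 * (p z.1 t - ρ)) * (m z.2 * (p z.2 t - ρ)) ∂π := by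
            rw [e1, e2, hm_norm, hq0 t, ← hEtdef]
        _ = ∫ z : ℝ × ℝ,
            m z.1 * m z.2 * (p z.1 t - ρ) * ((p z.1 t - ρ) - (p z.2 t - ρ)) ∂π := by
            rw [← integral_sub hf1 hf2]
            exact glueπ _ _ fun z => by ring
    have intLHS2 : Integrable (fun z : ℝ × ℝ =>
        m z.1 * m z.2 * (p z.1 t - ρ) * ((p z.1 t - ρ) - (p z.2 t - ρ))) π := by
      refine hintπ _ (((mm1.mul mm2).mul hq1m).mul hΔm).aestronglyMeasurable
        ⟨Cm * Cm * Cq * (2*Cq), ?_⟩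
      filter_upwards [hm1b, hm2b] with z h1 h2
      exact abs_mul2_le (abs_mul3_le h1 h2 (hq_bdd _)) (hΔ_bdd _)
    have intR1 : Integrable
        (fun z : ℝ × ℝ => (m z.1 * (p z.1 t - ρ)^2) * (m z.2 ^ 2 / ψ z.2)) π :=
      hmq2_int.mul_prod hν₁_int
    have haeY : ∀ᵐ z ∂π, m z.1 * m z.2 * (p z.1 t - ρ) * ((p z.1 t - ρ) - (p z.2 t - ρ))
        ≤ (1/(2*ν₁)) * ((m z.1 * (p z.1 t - ρ)^2) * (m z.2 ^ 2 / ψ z.2))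
          + (ν₁/2) * (ψ z.2 * m z.1 * ((p z.1 t - ρ) - (p z.2 t - ρ))^2) := by
      filter_upwards [hm1nn] with z h
      exact pointwise_young h (hψ_pos _) hν₁pos
    have hmain : Et ≤ (1/(2*ν₁)) * (Et * ν₁) + (ν₁/2) * Dψ := by
      calc Et = ∫ z : ℝ × ℝ,
          m z.1 * m z.2 * (p z.1 t - ρ) * ((p z.1 t - ρ) - (p z.2 t - ρ)) ∂π := hEt_eq
        _ ≤ ∫ z : ℝ × ℝ, (1/(2*ν₁)) * ((m z.1 * (p z.1 t - ρ)^2) * (m z.2 ^ 2 / ψ z.2))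
              + (ν₁/2) * (ψ z.2 * m z.1 * ((p z.1 t - ρ) - (p z.2 t - ρ))^2) ∂π :=
            integral_mono_ae intLHS2
              ((intR1.const_mul _).add (intDψ.const_mul _)) haeY
        _ = (1/(2*ν₁)) * ∫ z : ℝ × ℝ,
              (m z.1 * (p z.1 t - ρ)^2) * (m z.2 ^ 2 / ψ z.2) ∂π + (ν₁/2) * Dψ := by
            rw [integral_add (intR1.const_mul _) (intDψ.const_mul _),
              integral_const_mul, integral_const_mul, ← hDψdef]
        _ = (1/(2*ν₁)) * (Et * ν₁) + (ν₁/2) * Dψ := by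
            have e3 : ∫ z : ℝ × ℝ, (m z.1 * (p z.1 t - ρ)^2) * (m z.2 ^ 2 / ψ z.2) ∂π
                = (∫ c, m c * (p c t - ρ)^2 ∂μ) * ∫ c, m c ^ 2 / ψ c ∂μ :=
              integral_prod_mul (f := fun c => m c * (p c t - ρ)^2) (g := fun c => m c ^ 2 / ψ c)
            rw [e3, ← hEtdef, ← hν₁def]
    have hEtD : Et ≤ ν₁ * Dψ := by
      have h1 : (1/(2*ν₁)) * (Et * ν₁) = Et/2 := by
        field_simp
      linarith
    -- conclude
    rw [hE'2]
    have h7 : ν₂ * Et ≤ ν₁ * SΔ := by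
      nlinarith [mul_le_mul_of_nonneg_left hEtD hν₂.le,
        mul_le_mul_of_nonneg_left hν₂D hν₁pos.le]
    have h8 : ν₂ / (2*ν₁) * Et ≤ (1/2) * SΔ := by
      rw [div_mul_eq_mul_div, div_le_iff₀ (mul_pos two_pos hν₁pos)]
      nlinarith [h7]
    linarith
  -- assemble the conclusion
  refine ⟨fun t _ => hM t, ⟨ν₂ / (2 * ν₁), by positivity, ?_⟩⟩
  intro t ht
  set ν := ν₂ / (2 * ν₁) with hνdef
  have hνpos : 0 < ν := by positivity
  set F : ℝ → ℝ := fun r => (∫ c, m c * (p c r - ρ)^2 ∂μ) * Real.exp (ν * r) with hFdef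
  have hexpd : ∀ s : ℝ, HasDerivAt (fun r => Real.exp (ν * r)) (Real.exp (ν * s) * ν) s :=
    fun s => ((hasDerivAt_id s).const_mul ν).exp.congr_deriv (by simp only [id_eq]; ring)
  have hF : ∀ s, HasDerivAt F
      ((∫ c, 2 * m c * (p c s - ρ) * ochRHS B g p c s ∂μ) * Real.exp (ν * s)
        + (∫ c, m c * (p c s - ρ)^2 ∂μ) * (Real.exp (ν * s) * ν)) s := fun s =>
    (hdiff_E s).mul (hexpd s)
  have hE_nonneg : ∀ s : ℝ, 0 ≤ ∫ c, m c * (p c s - ρ)^2 ∂μ := fun s =>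
    integral_nonneg_of_ae (hm_nn.mono fun c h => mul_nonneg h (sq_nonneg _))
  have hFderiv : ∀ s, deriv F s ≤ 0 := by
    intro s
    rw [(hF s).deriv]
    have h1 := hEderiv s
    have h2 : (0:ℝ) < Real.exp (ν * s) := Real.exp_pos _
    have h3 := hE_nonneg s
    have h4 := mul_le_mul_of_nonneg_right h1 h2.le
    have h5 : -(ν₂ / (2 * ν₁)) * (∫ c, m c * (p c s - ρ)^2 ∂μ) * Real.exp (ν * s)
        + (∫ c, m c * (p c s - ρ)^2 ∂μ) * (Real.exp (ν * s) * ν) = 0 := by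
      rw [hνdef]; ring
    nlinarith [h4, h5]
  have hanti : Antitone F :=
    antitone_of_deriv_nonpos (fun s => (hF s).differentiableAt) hFderiv
  have hFt := hanti ht
  have hF0 : F 0 = ∫ c, m c * (p c 0 - ρ)^2 ∂μ := by
    rw [hFdef]
    simp
  have hexppos : (0:ℝ) < Real.exp (ν * t) := Real.exp_pos _
  rw [neg_mul, Real.exp_neg, ← div_eq_mul_inv, le_div_iff₀ hexppos]
  calc (∫ c, m c * (p c t - ρ)^2 ∂μ) * Real.exp (ν * t) = F t := rfl
    _ ≤ F 0 := hFt
    _ = ∫ c, m c * (p c 0 - ρ)^2 ∂μ := hF0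
end

section
/- Conservation law for the Ochrombel model on a co-evolving network: let m ∈ L^∞(μ∞), m ≥ 0, satisfy the adjoint eigenfunction equation (½Γ_B(c) + χΓ_P(c))·m(c) = ½ T_B* m(c) + χ T_P* m(c) for μ∞-a.e. c. Then for every h ∈ L¹(μ∞), ∫₀^∞ m(c)·[½(T_B h(c) − Γ_B(c)h(c)) + χ(T_P h(c) − Γ_P(c)h(c))] dμ∞(c) = 0. (Hence, along solutions p̃ of the co-evolving linear scattering equation with g = g∞, the quantity ρ_g = ∫ m p̃(·,t) dμ∞ is constant in time, and the asymptotic stationary equilibrium is p̃^∞ ≡ ρ_g with ρ_g = ∫ m(c) p̃(c,0) dμ∞(c).) -/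
open MeasureTheory Set Function
open scoped ENNReal NNReal

lemma integral_netMeasure {g : ℝ → ℝ} (hg : Measurable g) (hg0 : ∀ c, 0 ≤ g c) (f : ℝ → ℝ) :
    ∫ x, f x ∂(netMeasure g) = ∫ x in Ioi (0:ℝ), g x * f x := by
  rw [show netMeasure g
      = (volume.restrict (Ioi (0:ℝ))).withDensity (fun c => (((g c).toNNReal : ℝ≥0∞)))
      from rfl]
  rw [integral_withDensity_eq_integral_smul hg.real_toNNReal f]
  refine integral_congr_ae (Filter.Eventually.of_forall fun x => ?_)
  simp [NNReal.smul_def, Real.coe_toNNReal _ (hg0 x)]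

lemma isFiniteMeasure_netMeasure {g : ℝ → ℝ} (hg0 : ∀ c, 0 ≤ g c)
    (hgint : IntegrableOn g (Ioi (0:ℝ))) : IsFiniteMeasure (netMeasure g) := by
  constructor
  rw [netMeasure, withDensity_apply _ MeasurableSet.univ, Measure.restrict_univ,
    ← ofReal_integral_eq_lintegral_ofReal hgint (Filter.Eventually.of_forall hg0)]
  exact ENNReal.ofReal_lt_top

/-- a.e. bound on a kernel integral. -/
lemma ae_abs_integral_le {μ : Measure ℝ} [SFinite μ]
    {K : ℝ → ℝ → ℝ} {C : ℝ} (hKb : ∀ᵐ x ∂(μ.prod μ), |K x.1 x.2| ≤ C)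
    {φ : ℝ → ℝ} (hφ : Integrable φ μ) :
    ∀ᵐ c ∂μ, |∫ c₁, K c c₁ * φ c₁ ∂μ| ≤ C * ∫ c₁, |φ c₁| ∂μ := by
  filter_upwards [MeasureTheory.Measure.ae_ae_of_ae_prod hKb] with c hc
  calc |∫ c₁, K c c₁ * φ c₁ ∂μ| ≤ ∫ c₁, |K c c₁ * φ c₁| ∂μ := by
        simpa only [Real.norm_eq_abs] using
          norm_integral_le_integral_norm (μ := μ) (fun c₁ => K c c₁ * φ c₁)
    _ ≤ ∫ c₁, C * |φ c₁| ∂μ := by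
        refine integral_mono_of_nonneg (Filter.Eventually.of_forall fun c₁ => abs_nonneg _)
          (hφ.abs.const_mul C) ?_
        filter_upwards [hc] with c₁ h1
        rw [abs_mul]
        exact mul_le_mul_of_nonneg_right h1 (abs_nonneg _)
    _ = C * ∫ c₁, |φ c₁| ∂μ := integral_const_mul C _

/-- integrability of `z ↦ φ(z.2)` on a product with finite first factor. -/
lemma integrable_comp_snd' {μ ν : Measure ℝ} [IsFiniteMeasure μ] [SFinite ν]
    {φ : ℝ → ℝ} (hφ : Integrable φ ν) :
    Integrable (fun x : ℝ × ℝ => φ x.2) (μ.prod ν) := by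
  have h1 : Integrable φ ((μ.prod ν).map Prod.snd) := by
    rw [Measure.map_snd_prod]
    exact hφ.smul_measure (measure_ne_top μ univ)
  have h2 : AEStronglyMeasurable φ ((μ.prod ν).map Prod.snd) := by
    rw [Measure.map_snd_prod]; exact hφ.1.smul_measure _
  exact (integrable_map_measure h2 measurable_snd.aemeasurable).mp h1

section exchange

variable {μ : Measure ℝ} [IsFiniteMeasure μ]
  {K : ℝ → ℝ → ℝ} (hK : Measurable fun x : ℝ × ℝ => K x.1 x.2)
  {C : ℝ} (hKb : ∀ᵐ x ∂(μ.prod μ), |K x.1 x.2| ≤ C)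
  {m : ℝ → ℝ} (hm : Measurable m) {Cm : ℝ} (hmb : ∀ᵐ c ∂μ, |m c| ≤ Cm)
  {h : ℝ → ℝ} (hh : Measurable h) (hhi : Integrable h μ)

include hK hKb hm hmb hh hhi

lemma kernel_fubini :
    ∫ c, m c * ∫ c₁, K c c₁ * h c₁ ∂μ ∂μ = ∫ c, (∫ c₁, K c₁ c * m c₁ ∂μ) * h c ∂μ := by
  have hm1 : ∀ᵐ x ∂(μ.prod μ), |m x.1| ≤ Cm :=
    (Measure.quasiMeasurePreserving_fst).ae hmb
  have hGi : Integrable (fun x : ℝ × ℝ => m x.1 * (K x.1 x.2 * h x.2)) (μ.prod μ) := by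
    refine Integrable.mono' ((integrable_comp_snd' hhi.abs).const_mul (Cm * C))
      ((hm.comp measurable_fst).mul (hK.mul (hh.comp measurable_snd))).aestronglyMeasurable ?_
    filter_upwards [hKb, hm1] with x h1 h2
    have hmk : |m x.1| * |K x.1 x.2| ≤ Cm * C :=
      mul_le_mul h2 h1 (abs_nonneg _) ((abs_nonneg _).trans h2)
    calc ‖m x.1 * (K x.1 x.2 * h x.2)‖ = (|m x.1| * |K x.1 x.2|) * |h x.2| := by
          rw [Real.norm_eq_abs, abs_mul, abs_mul]; ring
      _ ≤ (Cm * C) * |h x.2| := mul_le_mul_of_nonneg_right hmk (abs_nonneg _)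
  calc ∫ c, m c * ∫ c₁, K c c₁ * h c₁ ∂μ ∂μ
      = ∫ c, ∫ c₁, m c * (K c c₁ * h c₁) ∂μ ∂μ := by
        refine integral_congr_ae (Filter.Eventually.of_forall fun c => ?_)
        exact (integral_const_mul (m c) _).symm
    _ = ∫ c₁, ∫ c, m c * (K c c₁ * h c₁) ∂μ ∂μ := integral_integral_swap hGi
    _ = ∫ c₁, (∫ c, K c c₁ * m c ∂μ) * h c₁ ∂μ := by
        refine integral_congr_ae (Filter.Eventually.of_forall fun c₁ => ?_)
        show ∫ c, m c * (K c c₁ * h c₁) ∂μ = (∫ c, K c c₁ * m c ∂μ) * h c₁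
        rw [← integral_mul_const]
        exact integral_congr_ae (Filter.Eventually.of_forall fun c => by ring)

lemma kernel_int_left :
    Integrable (fun c => m c * ∫ c₁, K c c₁ * h c₁ ∂μ) μ := by
  have hmeasI : StronglyMeasurable (fun c => ∫ c₁, K c c₁ * h c₁ ∂μ) :=
    (hK.mul (hh.comp measurable_snd)).stronglyMeasurable.integral_prod_right'
  refine Integrable.mono' (integrable_const (Cm * (C * ∫ c₁, |h c₁| ∂μ)))
    (hm.aestronglyMeasurable.mul hmeasI.aestronglyMeasurable) ?_
  filter_upwards [hmb, ae_abs_integral_le hKb hhi] with c h1 h2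
  rw [Real.norm_eq_abs, abs_mul]
  exact mul_le_mul h1 h2 (abs_nonneg _) ((abs_nonneg _).trans h1)

lemma kernel_int_right :
    Integrable (fun c => (∫ c₁, K c₁ c * m c₁ ∂μ) * h c) μ := by
  have hmi : Integrable m μ := by
    refine Integrable.mono' (integrable_const Cm) hm.aestronglyMeasurable ?_
    filter_upwards [hmb] with c h1
    simpa only [Real.norm_eq_abs] using h1
  have hKb' : ∀ᵐ x ∂(μ.prod μ), |K x.2 x.1| ≤ C :=
    Measure.measurePreserving_swap.quasiMeasurePreserving.ae hKb
  have hmeasI : StronglyMeasurable (fun c => ∫ c₁, K c₁ c * m c₁ ∂μ) :=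
    ((hK.comp measurable_swap).mul (hm.comp measurable_snd)).stronglyMeasurable.integral_prod_right'
  refine Integrable.mono' ((hhi.abs.const_mul (C * ∫ c₁, |m c₁| ∂μ)))
    (hmeasI.aestronglyMeasurable.mul hh.aestronglyMeasurable) ?_
  filter_upwards [ae_abs_integral_le (K := fun a b => K b a) hKb' hmi] with c h1
  rw [Real.norm_eq_abs, abs_mul]
  exact mul_le_mul_of_nonneg_right h1 (abs_nonneg _)

lemma kernel_int_gamma :
    Integrable (fun c => (∫ c₁, K c c₁ ∂μ) * (m c * h c)) μ := by
  have hone : Integrable (fun _ : ℝ => (1:ℝ)) μ := integrable_const 1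
  have hb : ∀ᵐ c ∂μ, |∫ c₁, K c c₁ ∂μ| ≤ C * (μ univ).toReal := by
    filter_upwards [ae_abs_integral_le hKb hone] with c h1
    simp at h1
    exact h1
  have hmeasI : StronglyMeasurable (fun c => ∫ c₁, K c c₁ ∂μ) :=
    hK.stronglyMeasurable.integral_prod_right'
  refine Integrable.mono' (hhi.abs.const_mul ((C * (μ univ).toReal) * Cm))
    (hmeasI.aestronglyMeasurable.mul ((hm.mul hh).aestronglyMeasurable)) ?_
  filter_upwards [hmb, hb] with c h1 h2
  calc ‖(∫ c₁, K c c₁ ∂μ) * (m c * h c)‖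
      = |∫ c₁, K c c₁ ∂μ| * (|m c| * |h c|) := by
        rw [Real.norm_eq_abs, abs_mul, abs_mul]
    _ ≤ (C * (μ univ).toReal) * (Cm * |h c|) := by
        refine mul_le_mul h2 ?_ (by positivity) ((abs_nonneg _).trans h2)
        exact mul_le_mul_of_nonneg_right h1 (abs_nonneg _)
    _ = (C * (μ univ).toReal) * Cm * |h c| := by ring

end exchange

/-- Conservation law for the Ochrombel model on a co-evolving network: if `m` satisfies the
adjoint eigenfunction equation `(½Γ_B + χΓ_P) m = ½T_B* m + χT_P* m` μ∞-a.e., then the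
quantity `∫ m [½(T_B h − Γ_B h) + χ(T_P h − Γ_P h)] dμ∞` vanishes for every `h ∈ L¹(μ∞)`. -/
theorem coevolving_scattering_conservation
    (ginf : ℝ → ℝ) (hg_meas : Measurable ginf) (hg_nonneg : ∀ c, 0 ≤ ginf c)
    (hg_prob : ∫ c in Ioi (0:ℝ), ginf c = 1)
    (B : ℝ → ℝ → ℝ) (hB_meas : Measurable (fun x : ℝ × ℝ => B x.1 x.2))
    (hB_pos : ∀ᵐ x ∂((netMeasure ginf).prod (netMeasure ginf)), 0 < B x.1 x.2)
    (hB_bdd : ∃ C : ℝ, ∀ᵐ x ∂((netMeasure ginf).prod (netMeasure ginf)), |B x.1 x.2| ≤ C)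
    (Q : ℝ → ℝ → ℝ) (hQ_meas : Measurable (fun x : ℝ × ℝ => Q x.1 x.2))
    (hQ_pos : ∀ᵐ x ∂((netMeasure ginf).prod (netMeasure ginf)), 0 < Q x.1 x.2)
    (hQ_bdd : ∃ C : ℝ, ∀ᵐ x ∂((netMeasure ginf).prod (netMeasure ginf)), |Q x.1 x.2| ≤ C)
    (χ : ℝ) (hχ : 0 < χ)
    (m : ℝ → ℝ) (hm_meas : Measurable m)
    (hm_bdd : ∃ C : ℝ, ∀ᵐ c ∂(netMeasure ginf), |m c| ≤ C)
    (hm_nonneg : 0 ≤ᵐ[netMeasure ginf] m)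
    (hm_eig : ∀ᵐ c ∂(netMeasure ginf),
      ((1/2) * GamB B ginf c + χ * GamB Q ginf c) * m c
        = (1/2) * TBstar B ginf m c + χ * TBstar Q ginf m c) :
    ∀ h : ℝ → ℝ, Integrable h (netMeasure ginf) →
      ∫ c, m c * ((1/2) * (TB B ginf h c - GamB B ginf c * h c)
        + χ * (TB Q ginf h c - GamB Q ginf c * h c)) ∂(netMeasure ginf) = 0 := by
  intro h hint
  obtain ⟨CB, hCB⟩ := hB_bdd
  obtain ⟨CQ, hCQ⟩ := hQ_bdd
  obtain ⟨Cm, hCm⟩ := hm_bdd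
  have hg_int : IntegrableOn ginf (Ioi (0:ℝ)) := by
    by_contra hc
    rw [MeasureTheory.integral_undef hc] at hg_prob
    norm_num at hg_prob
  haveI : IsFiniteMeasure (netMeasure ginf) := isFiniteMeasure_netMeasure hg_nonneg hg_int
  -- measurable representative of h
  set h' := hint.1.mk h with hh'def
  have hh'meas : Measurable h' := hint.1.stronglyMeasurable_mk.measurable
  have hhae : h =ᵐ[netMeasure ginf] h' := hint.1.ae_eq_mk
  have hint' : Integrable h' (netMeasure ginf) := hint.congr hhae
  -- the g-weighted functions agree a.e. with respect to Lebesgue measure on (0,∞)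
  have hgmul : (fun c => h c * ginf c) =ᵐ[volume.restrict (Ioi (0:ℝ))]
      (fun c => h' c * ginf c) := by
    have hhae2 : h =ᵐ[(volume.restrict (Ioi (0:ℝ))).withDensity
        (fun c => ENNReal.ofReal (ginf c))] h' := hhae
    have h0 := (ae_withDensity_iff (hg_meas.ennreal_ofReal)).mp hhae2
    filter_upwards [h0] with c hc
    by_cases hgc : ginf c = 0
    · simp [hgc]
    · have hpos : 0 < ginf c := lt_of_le_of_ne (hg_nonneg c) (Ne.symm hgc)
      have : ENNReal.ofReal (ginf c) ≠ 0 := by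
        simp [ENNReal.ofReal_eq_zero, not_le, hpos]
      rw [hc this]
  have hTBc : ∀ K : ℝ → ℝ → ℝ, ∀ c, TB K ginf h c = TB K ginf h' c := by
    intro K c
    refine integral_congr_ae ?_
    filter_upwards [hgmul] with c₁ e
    show K c c₁ * h c₁ * ginf c₁ = K c c₁ * h' c₁ * ginf c₁
    rw [mul_assoc, mul_assoc]
    exact congrArg _ e
  -- conversion identities
  have tbeq : ∀ (K : ℝ → ℝ → ℝ) (φ : ℝ → ℝ) (c : ℝ),
      TB K ginf φ c = ∫ c₁, K c c₁ * φ c₁ ∂(netMeasure ginf) := by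
    intro K φ c
    rw [show TB K ginf φ c = ∫ c₁ in Ioi (0:ℝ), K c c₁ * φ c₁ * ginf c₁ from rfl,
      integral_netMeasure hg_meas hg_nonneg (fun c₁ => K c c₁ * φ c₁)]
    exact integral_congr_ae (Filter.Eventually.of_forall fun c₁ => by ring)
  have gameq : ∀ (K : ℝ → ℝ → ℝ) (c : ℝ),
      GamB K ginf c = ∫ c₁, K c c₁ ∂(netMeasure ginf) := by
    intro K c
    rw [show GamB K ginf c = ∫ c₁ in Ioi (0:ℝ), K c c₁ * ginf c₁ from rfl,
      integral_netMeasure hg_meas hg_nonneg (fun c₁ => K c c₁)]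
    exact integral_congr_ae (Filter.Eventually.of_forall fun c₁ => by ring)
  have tbstareq : ∀ (K : ℝ → ℝ → ℝ) (c : ℝ),
      TBstar K ginf m c = ∫ c₁, K c₁ c * m c₁ ∂(netMeasure ginf) := by
    intro K c
    rw [show TBstar K ginf m c = ∫ c₁ in Ioi (0:ℝ), K c₁ c * m c₁ * ginf c₁ from rfl,
      integral_netMeasure hg_meas hg_nonneg (fun c₁ => K c₁ c * m c₁)]
    exact integral_congr_ae (Filter.Eventually.of_forall fun c₁ => by ring)
  -- exchange identities and integrability
  have EB : ∫ c, m c * TB B ginf h' c ∂(netMeasure ginf)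
      = ∫ c, TBstar B ginf m c * h' c ∂(netMeasure ginf) := by
    have h1 := kernel_fubini hB_meas hCB hm_meas hCm hh'meas hint'
    calc ∫ c, m c * TB B ginf h' c ∂(netMeasure ginf)
        = ∫ c, m c * ∫ c₁, B c c₁ * h' c₁ ∂(netMeasure ginf) ∂(netMeasure ginf) := by
          exact integral_congr_ae (Filter.Eventually.of_forall fun c => by simp only [tbeq])
      _ = ∫ c, (∫ c₁, B c₁ c * m c₁ ∂(netMeasure ginf)) * h' c ∂(netMeasure ginf) := h1
      _ = ∫ c, TBstar B ginf m c * h' c ∂(netMeasure ginf) := by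
          exact integral_congr_ae (Filter.Eventually.of_forall fun c => by simp only [tbstareq])
  have EQ : ∫ c, m c * TB Q ginf h' c ∂(netMeasure ginf)
      = ∫ c, TBstar Q ginf m c * h' c ∂(netMeasure ginf) := by
    have h1 := kernel_fubini hQ_meas hCQ hm_meas hCm hh'meas hint'
    calc ∫ c, m c * TB Q ginf h' c ∂(netMeasure ginf)
        = ∫ c, m c * ∫ c₁, Q c c₁ * h' c₁ ∂(netMeasure ginf) ∂(netMeasure ginf) := by
          exact integral_congr_ae (Filter.Eventually.of_forall fun c => by simp only [tbeq])
      _ = ∫ c, (∫ c₁, Q c₁ c * m c₁ ∂(netMeasure ginf)) * h' c ∂(netMeasure ginf) := h1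
      _ = ∫ c, TBstar Q ginf m c * h' c ∂(netMeasure ginf) := by
          exact integral_congr_ae (Filter.Eventually.of_forall fun c => by simp only [tbstareq])
  have IB1 : Integrable (fun c => m c * TB B ginf h' c) (netMeasure ginf) :=
    (kernel_int_left hB_meas hCB hm_meas hCm hh'meas hint').congr
      (Filter.Eventually.of_forall fun c => by simp only [tbeq])
  have IQ1 : Integrable (fun c => m c * TB Q ginf h' c) (netMeasure ginf) :=
    (kernel_int_left hQ_meas hCQ hm_meas hCm hh'meas hint').congr
      (Filter.Eventually.of_forall fun c => by simp only [tbeq])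
  have IB3 : Integrable (fun c => GamB B ginf c * (m c * h' c)) (netMeasure ginf) :=
    (kernel_int_gamma hB_meas hCB hm_meas hCm hh'meas hint').congr
      (Filter.Eventually.of_forall fun c => by simp only [gameq])
  have IQ3 : Integrable (fun c => GamB Q ginf c * (m c * h' c)) (netMeasure ginf) :=
    (kernel_int_gamma hQ_meas hCQ hm_meas hCm hh'meas hint').congr
      (Filter.Eventually.of_forall fun c => by simp only [gameq])
  have IB5 : Integrable (fun c => TBstar B ginf m c * h' c) (netMeasure ginf) :=
    (kernel_int_right hB_meas hCB hm_meas hCm hh'meas hint').congr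
      (Filter.Eventually.of_forall fun c => by simp only [tbstareq])
  have IQ5 : Integrable (fun c => TBstar Q ginf m c * h' c) (netMeasure ginf) :=
    (kernel_int_right hQ_meas hCQ hm_meas hCm hh'meas hint').congr
      (Filter.Eventually.of_forall fun c => by simp only [tbstareq])
  -- replace h by its measurable representative in the goal
  have hgoal_eq : ∫ c, m c * ((1/2) * (TB B ginf h c - GamB B ginf c * h c)
        + χ * (TB Q ginf h c - GamB Q ginf c * h c)) ∂(netMeasure ginf)
      = ∫ c, m c * ((1/2) * (TB B ginf h' c - GamB B ginf c * h' c)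
        + χ * (TB Q ginf h' c - GamB Q ginf c * h' c)) ∂(netMeasure ginf) := by
    refine integral_congr_ae ?_
    filter_upwards [hhae] with c e
    rw [hTBc B c, hTBc Q c, e]
  rw [hgoal_eq]
  have expand : (fun c => m c * ((1/2) * (TB B ginf h' c - GamB B ginf c * h' c)
        + χ * (TB Q ginf h' c - GamB Q ginf c * h' c)))
      = fun c => ((1/2) * (m c * TB B ginf h' c) + χ * (m c * TB Q ginf h' c))
        - ((1/2) * (GamB B ginf c * (m c * h' c)) + χ * (GamB Q ginf c * (m c * h' c))) :=
    funext fun c => by ring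
  have IL1 : Integrable (fun c => (1/2) * (m c * TB B ginf h' c)) (netMeasure ginf) :=
    IB1.const_mul _
  have IL2 : Integrable (fun c => χ * (m c * TB Q ginf h' c)) (netMeasure ginf) :=
    IQ1.const_mul _
  have IR1 : Integrable (fun c => (1/2) * (GamB B ginf c * (m c * h' c))) (netMeasure ginf) :=
    IB3.const_mul _
  have IR2 : Integrable (fun c => χ * (GamB Q ginf c * (m c * h' c))) (netMeasure ginf) :=
    IQ3.const_mul _
  have IL : Integrable (fun c => (1/2) * (m c * TB B ginf h' c)
      + χ * (m c * TB Q ginf h' c)) (netMeasure ginf) := IL1.add IL2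
  have IR : Integrable (fun c => (1/2) * (GamB B ginf c * (m c * h' c))
      + χ * (GamB Q ginf c * (m c * h' c))) (netMeasure ginf) := IR1.add IR2
  rw [expand, integral_sub IL IR, integral_add IL1 IL2, integral_add IR1 IR2,
    integral_const_mul, integral_const_mul, integral_const_mul, integral_const_mul, EB, EQ]
  have key : (1/2) * (∫ c, TBstar B ginf m c * h' c ∂(netMeasure ginf))
        + χ * (∫ c, TBstar Q ginf m c * h' c ∂(netMeasure ginf))
      = (1/2) * (∫ c, GamB B ginf c * (m c * h' c) ∂(netMeasure ginf))
        + χ * (∫ c, GamB Q ginf c * (m c * h' c) ∂(netMeasure ginf)) := by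
    have JL1 : Integrable (fun c => (1/2) * (TBstar B ginf m c * h' c)) (netMeasure ginf) :=
      IB5.const_mul _
    have JL2 : Integrable (fun c => χ * (TBstar Q ginf m c * h' c)) (netMeasure ginf) :=
      IQ5.const_mul _
    have JR1 : Integrable (fun c => (1/2) * (GamB B ginf c * (m c * h' c))) (netMeasure ginf) :=
      IB3.const_mul _
    have JR2 : Integrable (fun c => χ * (GamB Q ginf c * (m c * h' c))) (netMeasure ginf) :=
      IQ3.const_mul _
    rw [← integral_const_mul, ← integral_const_mul, ← integral_const_mul, ← integral_const_mul,
      ← integral_add JL1 JL2, ← integral_add JR1 JR2]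
    refine integral_congr_ae ?_
    filter_upwards [hm_eig] with c e
    show (1/2) * (TBstar B ginf m c * h' c) + χ * (TBstar Q ginf m c * h' c)
        = (1/2) * (GamB B ginf c * (m c * h' c)) + χ * (GamB Q ginf c * (m c * h' c))
    calc (1/2) * (TBstar B ginf m c * h' c) + χ * (TBstar Q ginf m c * h' c)
        = ((1/2) * TBstar B ginf m c + χ * TBstar Q ginf m c) * h' c := by ring
      _ = (((1/2) * GamB B ginf c + χ * GamB Q ginf c) * m c) * h' c := by rw [e]
      _ = (1/2) * (GamB B ginf c * (m c * h' c)) + χ * (GamB Q ginf c * (m c * h' c)) := by ring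
  rw [key, sub_self]
end
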